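/- The variance of the number of bonds in a uniformly random permutation of length n (n ≥ 2) equals 4(n−2)²/(n(n−1)) + 2(n−1)/n − 4(n−1)²/n². -/

import Mathlib

open Finset

/-- `del p i`: delete the `i`-th entry of `p` and relabel order-isomorphically. -/
def del {n : ℕ} (p : Equiv.Perm (Fin (n + 1))) (i : Fin (n + 1)) : Equiv.Perm (Fin n) :=
  (Tuple.sort fun j => p (i.succAbove j))⁻¹

/-- `D1 p`: the set of `(n-1)`-patterns of `p`. -/
def D1 {n : ℕ} (p : Equiv.Perm (Fin (n + 1))) : Finset (Equiv.Perm (Fin n)) :=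
  Finset.univ.image (del p)

/-- `ins q j k`: insert the value `k - 1/2` just left of position `j` and relabel. -/
def ins {n : ℕ} (q : Equiv.Perm (Fin n)) (j k : Fin (n + 1)) : Equiv.Perm (Fin (n + 1)) :=
  (finSuccEquiv' j).trans ((Equiv.optionCongr q).trans (finSuccEquiv' k).symm)

/-- `C p`: the number of bonds of `p` (adjacent positions with values differing by 1). -/
def C {n : ℕ} (p : Equiv.Perm (Fin (n + 1))) : ℕ :=
  (Finset.univ.filter fun i : Fin n =>
    Nat.dist (p i.castSucc).val (p i.succ).val = 1).card

/-- minimum gap of an injective word `f`, via the taxicab metric on (index, value). -/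
noncomputable def mgF {n : ℕ} (f : Fin n → ℕ) : ℕ :=
  sInf {m : ℕ | ∃ i j : Fin n, i < j ∧ Nat.dist i.val j.val + Nat.dist (f i) (f j) = m}

/-- minimum gap of a permutation. -/
noncomputable def mg {n : ℕ} (p : Equiv.Perm (Fin n)) : ℕ := mgF fun i => (p i).val

/-- the span of entries `p i` and `p j`: indices of entries strictly between them
horizontally or vertically. -/
def span {n : ℕ} (p : Equiv.Perm (Fin n)) (i j : Fin n) : Finset (Fin n) :=
  Finset.univ.filter fun m =>
    (i < m ∧ m < j) ∨ (min (p i) (p j) < p m ∧ p m < max (p i) (p j))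

/-- the pattern of `p` after deleting the entries at positions in `S`, encoded as the
list of (0-based) ranks of the remaining entries in positional order. -/
def patList {n : ℕ} (p : Equiv.Perm (Fin n)) (S : Finset (Fin n)) : List ℕ :=
  let l := (Sᶜ.sort (· ≤ ·)).map fun t => (p t).val
  l.map fun v => (l.filter fun w => w < v).length

/-- `Dk p k`: the set of distinct `(n-k)`-patterns of `p`. -/
def Dk {n : ℕ} (p : Equiv.Perm (Fin n)) (k : ℕ) : Finset (List ℕ) :=
  (Finset.univ.filter fun S : Finset (Fin n) => S.card = k).image (patList p)


open Finset Equiv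

variable {α β : Type*} [Fintype α] [DecidableEq α] [Fintype β] [DecidableEq β]

lemma exists_perm_extend (e f : β ↪ α) : ∃ p : Equiv.Perm α, ∀ b, p (e b) = f b := by
  classical
  have hcard : Fintype.card (↥(Set.range e)ᶜ) = Fintype.card (↥(Set.range f)ᶜ) := by
    rw [Fintype.card_compl_set, Fintype.card_compl_set, Fintype.card_range, Fintype.card_range]
  let g2 : (↥(Set.range e)ᶜ) ≃ (↥(Set.range f)ᶜ) := Fintype.equivOfCardEq hcard
  let g1 : (Set.range e) ≃ (Set.range f) :=
    (Equiv.ofInjective e e.injective).symm.trans (Equiv.ofInjective f f.injective)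
  refine ⟨(Equiv.Set.sumCompl (Set.range e)).symm.trans
      ((g1.sumCongr g2).trans (Equiv.Set.sumCompl (Set.range f))), fun b => ?_⟩
  have hb : (e b : α) ∈ Set.range e := ⟨b, rfl⟩
  simp only [Equiv.trans_apply]
  rw [Equiv.Set.sumCompl_symm_apply_of_mem hb]
  have : g1 ⟨e b, hb⟩ = ⟨f b, ⟨b, rfl⟩⟩ := by
    have h1 : (⟨e b, hb⟩ : Set.range e) = Equiv.ofInjective e e.injective b := rfl
    rw [h1]
    simp [g1]
  rw [Equiv.sumCongr_apply, Sum.map_inl, this, Equiv.Set.sumCompl_apply_inl]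

set_option linter.unusedSectionVars false


set_option linter.unusedSectionVars false

lemma card_perm_fixing (e : β ↪ α) :
    (univ.filter fun p : Equiv.Perm α => ∀ b, p (e b) = e b).card
      = (Fintype.card α - Fintype.card β).factorial := by
  classical
  have hpred : ∀ p : Equiv.Perm α,
      (∀ b, p (e b) = e b) ↔ (∀ a, ¬ (a ∉ Set.range e) → p a = a) := by
    intro p
    constructor
    · rintro h a ha
      obtain ⟨b, rfl⟩ := not_not.mp ha
      exact h b
    · intro h b
      exact h (e b) (not_not.mpr ⟨b, rfl⟩)
  rw [← Fintype.card_subtype]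
  rw [Fintype.card_congr ((Equiv.subtypeEquivRight hpred).trans
    (Equiv.Perm.subtypeEquivSubtypePerm (fun a => a ∉ Set.range e)).symm)]
  rw [Fintype.card_perm]
  congr 1
  rw [Fintype.card_congr (Equiv.subtypeEquivRight (q := fun a => a ∈ (Set.range e)ᶜ) (by simp))]
  rw [Fintype.card_compl_set, Fintype.card_range]

lemma card_perm_fiber (e f : β ↪ α) :
    (univ.filter fun p : Equiv.Perm α => ∀ b, p (e b) = f b).card
      = (Fintype.card α - Fintype.card β).factorial := by
  classical
  obtain ⟨p0, hp0⟩ := exists_perm_extend e f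
  rw [← card_perm_fixing e]
  apply Finset.card_nbij' (fun p => p0⁻¹ * p) (fun p => p0 * p)
  · intro p hp
    simp only [mem_coe, mem_filter, mem_univ, true_and] at hp ⊢
    intro b
    rw [Equiv.Perm.mul_apply, hp b, ← hp0 b]
    simp
  · intro p hp
    simp only [mem_coe, mem_filter, mem_univ, true_and] at hp ⊢
    intro b
    rw [Equiv.Perm.mul_apply, hp b, hp0 b]
  · intro p _; simp [mul_assoc]
  · intro p _; simp [mul_assoc]

lemma card_perm_pattern (e : β ↪ α) (Q : (β → α) → Prop) [DecidablePred Q] :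
    (univ.filter fun p : Equiv.Perm α => Q (fun b => p (e b))).card
      = (Fintype.card α - Fintype.card β).factorial
        * (univ.filter fun f : β → α => Function.Injective f ∧ Q f).card := by
  classical
  rw [Finset.card_eq_sum_card_fiberwise (f := fun (p : Equiv.Perm α) (b : β) => p (e b))
      (t := univ.filter fun f : β → α => Function.Injective f ∧ Q f)
      (fun p hp => by
        simp only [mem_coe, mem_filter, mem_univ, true_and] at hp ⊢
        exact ⟨fun b1 b2 h => e.injective (p.injective h), hp⟩)]
  have hterm : ∀ f ∈ (univ.filter fun f : β → α => Function.Injective f ∧ Q f),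
      ((univ.filter fun p : Equiv.Perm α => Q (fun b => p (e b))).filter
        (fun p => (fun b => p (e b)) = f)).card
      = (Fintype.card α - Fintype.card β).factorial := by
    intro f hf
    simp only [mem_filter, mem_univ, true_and] at hf
    rw [← card_perm_fiber e ⟨f, hf.1⟩]
    congr 1
    ext p
    simp only [mem_filter, mem_univ, true_and, funext_iff, Function.Embedding.coeFn_mk]
    constructor
    · exact fun h => h.2
    · intro h
      refine ⟨?_, h⟩
      have : (fun b => p (e b)) = f := funext h
      rw [this]; exact hf.2
  rw [Finset.sum_congr rfl hterm, Finset.sum_const, smul_eq_mul, mul_comm]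

-- basic ite/sum helpers
lemma ite_conj {A B : Prop} [Decidable A] [Decidable B] :
    (if A ∧ B then (1:ℕ) else 0) = (if A then 1 else 0) * (if B then 1 else 0) := by
  split_ifs <;> simp_all

lemma sum_ite_val_eq (m c : ℕ) :
    (∑ b : Fin m, if b.val = c then (1:ℕ) else 0) = if c < m then 1 else 0 := by
  rw [← Finset.card_filter]
  split_ifs with h
  · rw [Finset.card_eq_one]
    exact ⟨⟨c, h⟩, by ext b; simp [Finset.mem_filter, Fin.ext_iff]⟩
  · rw [Finset.card_eq_zero]
    ext b
    simp only [mem_filter, mem_univ, true_and, notMem_empty, iff_false]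
    omega
  
lemma sum_ite_val_lt (m t : ℕ) (h : t ≤ m) :
    (∑ a : Fin m, if a.val < t then (1:ℕ) else 0) = t := by
  rw [← Finset.card_filter, ← Finset.card_range t]
  refine Finset.card_bij' (fun a _ => a.val) (fun v hv => ⟨v, by simp at hv; omega⟩)
    ?_ ?_ ?_ ?_
  · intro a ha; simp at ha ⊢; omega
  · intro v hv; simp at hv ⊢; omega
  · intro a ha; rfl
  · intro v hv; rfl

lemma nat_dist_eq (a b : ℕ) : Nat.dist a b = (a - b) + (b - a) := rfl

lemma pairdiag (m : ℕ) :
    ((univ : Finset (Fin (m+1) × Fin (m+1))).filter fun x => x.1 = x.2).card = m + 1 := by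
  rw [Finset.card_filter, Fintype.sum_prod_type]
  have : ∀ a : Fin (m+1), (∑ b : Fin (m+1), if a = b then (1:ℕ) else 0) = 1 := by
    intro a
    rw [Finset.sum_ite_eq (univ) a (fun _ => (1:ℕ))]
    simp
  rw [Finset.sum_congr rfl fun a _ => this a]
  simp

lemma pair_succ₁ (m : ℕ) :
    ((univ : Finset (Fin (m+1) × Fin (m+1))).filter fun x => x.2.val = x.1.val + 1).card = m := by
  rw [Finset.card_filter, Fintype.sum_prod_type]
  rw [Finset.sum_congr rfl fun a _ => sum_ite_val_eq (m+1) (a.val+1)]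
  have : ∀ a : Fin (m+1), (if a.val + 1 < m + 1 then (1:ℕ) else 0) = (if a.val < m then 1 else 0) := by
    intro a; split_ifs <;> omega
  rw [Finset.sum_congr rfl fun a _ => this a]
  exact sum_ite_val_lt (m+1) m (by omega)

lemma pair_succ₂ (m : ℕ) :
    ((univ : Finset (Fin (m+1) × Fin (m+1))).filter fun x => x.1.val = x.2.val + 1).card = m := by
  refine Eq.trans ?_ (pair_succ₁ m)
  refine Finset.card_nbij' (fun x => (x.2, x.1)) (fun x => (x.2, x.1)) ?_ ?_ ?_ ?_ <;>
    simp [Finset.mem_filter, Set.MapsTo, Set.LeftInvOn, Set.RightInvOn]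

lemma pairdist1 (m : ℕ) :
    ((univ : Finset (Fin (m+1) × Fin (m+1))).filter fun x => Nat.dist x.1.val x.2.val = 1).card
      = 2 * m := by
  have hcong : (univ : Finset (Fin (m+1) × Fin (m+1))).filter
      (fun x => Nat.dist x.1.val x.2.val = 1)
      = univ.filter fun x => (x.2.val = x.1.val + 1 ∨ x.1.val = x.2.val + 1) := by
    apply Finset.filter_congr
    intro x _
    simp only [nat_dist_eq, eq_iff_iff]
    omega
  rw [hcong, Finset.filter_or, Finset.card_union_of_disjoint, pair_succ₁, pair_succ₂]
  · ring
  · rw [Finset.disjoint_filter]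
    intro x _ h1 h2
    omega

lemma pairdist2 (m : ℕ) :
    ((univ : Finset (Fin (m+1) × Fin (m+1))).filter fun x => 2 ≤ Nat.dist x.1.val x.2.val).card
      = m * m - m := by
  have key := Finset.card_filter_add_card_filter_not
    (s := (univ : Finset (Fin (m+1) × Fin (m+1))))
    (p := fun x => 2 ≤ Nat.dist x.1.val x.2.val)
  have hneg : ((univ : Finset (Fin (m+1) × Fin (m+1))).filter
      fun x => ¬ 2 ≤ Nat.dist x.1.val x.2.val).card = (m+1) + 2*m := by
    have hcong : (univ : Finset (Fin (m+1) × Fin (m+1))).filter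
        (fun x => ¬ 2 ≤ Nat.dist x.1.val x.2.val)
        = univ.filter fun x => (x.1 = x.2 ∨ Nat.dist x.1.val x.2.val = 1) := by
      apply Finset.filter_congr
      intro x _
      simp only [nat_dist_eq, eq_iff_iff, Fin.ext_iff]
      omega
    rw [hcong, Finset.filter_or, Finset.card_union_of_disjoint, pairdiag, pairdist1]
    rw [Finset.disjoint_filter]
    intro x _ h1 h2
    rw [nat_dist_eq] at h2
    rw [Fin.ext_iff] at h1
    omega
  have huniv : ((univ : Finset (Fin (m+1) × Fin (m+1)))).card = (m+1) * (m+1) := by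
    simp [Finset.card_univ]
  have hexp : (m+1) * (m+1) = m*m + 2*m + 1 := by ring
  omega

lemma pairdist2' (m : ℕ) :
    ((univ : Finset (Fin (m+2) × Fin (m+2))).filter fun x =>
      x.1.val < m+1 ∧ x.2.val < m+1 ∧ 2 ≤ Nat.dist x.1.val x.2.val).card = m * m - m := by
  refine Eq.trans ?_ (pairdist2 m)
  refine Finset.card_bij'
    (fun x hx => ((⟨x.1.val, by simp at hx; omega⟩ : Fin (m+1)),
                  (⟨x.2.val, by simp at hx; omega⟩ : Fin (m+1))))
    (fun y _ => (y.1.castSucc, y.2.castSucc)) ?_ ?_ ?_ ?_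
  · intro x hx; simp at hx ⊢; omega
  · intro y hy; simp at hy ⊢; exact ⟨by have := y.1.isLt; omega, by have := y.2.isLt; omega, hy⟩
  · intro x hx; simp [Prod.ext_iff, Fin.ext_iff]
  · intro y hy; simp [Prod.ext_iff, Fin.ext_iff]

lemma inj2 {γ : Type*} (f : Fin 2 → γ) : Function.Injective f ↔ f 0 ≠ f 1 := by
  constructor
  · intro h hne; exact (by decide : ¬ (0 : Fin 2) = 1) (h hne)
  · intro h i j hij
    fin_cases i <;> fin_cases j <;> simp_all
  
lemma inj3 {γ : Type*} (f : Fin 3 → γ) :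
    Function.Injective f ↔ f 0 ≠ f 1 ∧ f 0 ≠ f 2 ∧ f 1 ≠ f 2 := by
  constructor
  · intro h
    exact ⟨h.ne (by decide), h.ne (by decide), h.ne (by decide)⟩
  · rintro ⟨h1, h2, h3⟩ i j hij
    fin_cases i <;> fin_cases j <;> simp_all

lemma inj4 {γ : Type*} (f : Fin 4 → γ) :
    Function.Injective f ↔ f 0 ≠ f 1 ∧ f 0 ≠ f 2 ∧ f 0 ≠ f 3 ∧ f 1 ≠ f 2 ∧ f 1 ≠ f 3
      ∧ f 2 ≠ f 3 := by
  constructor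
  · intro h
    exact ⟨h.ne (by decide), h.ne (by decide), h.ne (by decide), h.ne (by decide),
      h.ne (by decide), h.ne (by decide)⟩
  · rintro ⟨h1, h2, h3, h4, h5, h6⟩ i j hij
    fin_cases i <;> fin_cases j <;> simp_all

lemma card_fun2 {m : ℕ} (P : Fin m → Fin m → Prop) [∀ a b, Decidable (P a b)] :
    ((univ : Finset (Fin 2 → Fin m)).filter fun f => P (f 0) (f 1)).card
      = ((univ : Finset (Fin m × Fin m)).filter fun x => P x.1 x.2).card := by
  refine Finset.card_nbij' (fun f => (f 0, f 1)) (fun x => ![x.1, x.2]) ?_ ?_ ?_ ?_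
  · intro f hf; simpa using by simpa using hf
  · intro x hx; simp at hx ⊢; exact hx
  · intro f _; funext b; fin_cases b <;> simp
  · intro x _; simp

lemma card_fun3 {m : ℕ} (P : Fin m → Fin m → Fin m → Prop) [∀ a b c, Decidable (P a b c)] :
    ((univ : Finset (Fin 3 → Fin m)).filter fun f => P (f 0) (f 1) (f 2)).card
      = ((univ : Finset (Fin m × Fin m × Fin m)).filter fun x => P x.1 x.2.1 x.2.2).card := by
  refine Finset.card_nbij' (fun f => (f 0, f 1, f 2)) (fun x => ![x.1, x.2.1, x.2.2]) ?_ ?_ ?_ ?_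
  · intro f hf; simpa using by simpa using hf
  · intro x hx; simp at hx ⊢; exact hx
  · intro f _; funext b; fin_cases b <;> simp
  · intro x _; simp

lemma card_fun4 {m : ℕ} (P : Fin m → Fin m → Fin m → Fin m → Prop)
    [∀ a b c d, Decidable (P a b c d)] :
    ((univ : Finset (Fin 4 → Fin m)).filter fun f => P (f 0) (f 1) (f 2) (f 3)).card
      = ((univ : Finset (Fin m × Fin m × Fin m × Fin m)).filter
          fun x => P x.1 x.2.1 x.2.2.1 x.2.2.2).card := by
  refine Finset.card_nbij' (fun f => (f 0, f 1, f 2, f 3))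
    (fun x => ![x.1, x.2.1, x.2.2.1, x.2.2.2]) ?_ ?_ ?_ ?_
  · intro f hf; simpa using by simpa using hf
  · intro x hx; simp at hx ⊢; exact hx
  · intro f _; funext b; fin_cases b <;> simp
  · intro x _; simp

lemma cnt2 (m : ℕ) :
    ((univ : Finset (Fin 2 → Fin (m+1))).filter fun f =>
      Function.Injective f ∧ Nat.dist (f 0).val (f 1).val = 1).card = 2 * m := by
  have h1 : ∀ f : Fin 2 → Fin (m+1),
      (Function.Injective f ∧ Nat.dist (f 0).val (f 1).val = 1)
        ↔ Nat.dist (f 0).val (f 1).val = 1 := by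
    intro f
    rw [inj2]
    simp only [ne_eq, Fin.ext_iff, nat_dist_eq]
    omega
  rw [Finset.filter_congr (fun f _ => h1 f),
    card_fun2 (P := fun a b : Fin (m+1) => Nat.dist a.val b.val = 1)]
  exact pairdist1 m

lemma count_asc (m : ℕ) :
    ((univ : Finset (Fin (m+2) × Fin (m+2) × Fin (m+2))).filter fun x =>
      x.2.1.val = x.1.val + 1 ∧ x.2.2.val = x.1.val + 2).card = m := by
  rw [Finset.card_filter, Fintype.sum_prod_type]
  have houter : ∀ a : Fin (m+2),
      (∑ y : Fin (m+2) × Fin (m+2), if y.1.val = a.val + 1 ∧ y.2.val = a.val + 2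
        then (1:ℕ) else 0) = if a.val < m then 1 else 0 := by
    intro a
    rw [Fintype.sum_prod_type]
    have inner : ∀ b : Fin (m+2),
        (∑ c : Fin (m+2), if b.val = a.val + 1 ∧ c.val = a.val + 2 then (1:ℕ) else 0)
          = (if b.val = a.val + 1 then 1 else 0) * (if a.val + 2 < m + 2 then 1 else 0) := by
      intro b
      rw [Finset.sum_congr rfl (fun c _ => ite_conj), ← Finset.mul_sum,
        sum_ite_val_eq (m+2) (a.val+2)]
    rw [Finset.sum_congr rfl (fun b _ => inner b), ← Finset.sum_mul,
      sum_ite_val_eq (m+2) (a.val+1)]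
    split_ifs <;> omega
  rw [Finset.sum_congr rfl (fun a _ => houter a)]
  exact sum_ite_val_lt (m+2) m (by omega)

lemma count_desc (m : ℕ) :
    ((univ : Finset (Fin (m+2) × Fin (m+2) × Fin (m+2))).filter fun x =>
      x.2.1.val = x.2.2.val + 1 ∧ x.1.val = x.2.2.val + 2).card = m := by
  refine Eq.trans ?_ (count_asc m)
  refine Finset.card_nbij' (fun x => (x.2.2, x.2.1, x.1)) (fun x => (x.2.2, x.2.1, x.1))
    ?_ ?_ ?_ ?_ <;> simp [Finset.mem_filter] <;> tauto

lemma cnt3 (m : ℕ) :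
    ((univ : Finset (Fin 3 → Fin (m+2))).filter fun f =>
      Function.Injective f ∧ Nat.dist (f 0).val (f 1).val = 1
        ∧ Nat.dist (f 1).val (f 2).val = 1).card = 2 * m := by
  have h1 : ∀ f : Fin 3 → Fin (m+2),
      (Function.Injective f ∧ Nat.dist (f 0).val (f 1).val = 1
        ∧ Nat.dist (f 1).val (f 2).val = 1)
      ↔ (((f 1).val = (f 0).val + 1 ∧ (f 2).val = (f 0).val + 2)
          ∨ ((f 1).val = (f 2).val + 1 ∧ (f 0).val = (f 2).val + 2)) := by
    intro f
    rw [inj3]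
    simp only [ne_eq, Fin.ext_iff, nat_dist_eq]
    omega
  rw [Finset.filter_congr (fun f _ => h1 f),
    card_fun3 (P := fun a b c : Fin (m+2) =>
      (b.val = a.val + 1 ∧ c.val = a.val + 2) ∨ (b.val = c.val + 1 ∧ a.val = c.val + 2))]
  rw [Finset.filter_or, Finset.card_union_of_disjoint, count_asc, count_desc]
  · ring
  · rw [Finset.disjoint_filter]
    intro x _ h1 h2
    omega

lemma qcase1 (m : ℕ) :
    ((univ : Finset (Fin (m+2) × Fin (m+2) × Fin (m+2) × Fin (m+2))).filter fun x =>
      x.2.1.val = x.1.val + 1 ∧ x.2.2.2.val = x.2.2.1.val + 1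
        ∧ 2 ≤ Nat.dist x.1.val x.2.2.1.val).card = m * m - m := by
  refine Eq.trans ?_ (pairdist2' m)
  refine Finset.card_bij' (fun x _ => (x.1, x.2.2.1))
    (fun y hy => (y.1, ⟨y.1.val + 1, by simp at hy; omega⟩, y.2,
      ⟨y.2.val + 1, by simp at hy; omega⟩)) ?_ ?_ ?_ ?_
  · intro x hx
    simp only [Finset.mem_filter, Finset.mem_univ, true_and] at hx ⊢
    have h1 := x.2.1.isLt
    have h2 := x.2.2.2.isLt
    exact ⟨by omega, by omega, hx.2.2⟩
  · intro y hy
    simp at hy ⊢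
    exact hy.2.2
  · intro x hx
    simp only [Finset.mem_filter, Finset.mem_univ, true_and] at hx
    simp [Prod.ext_iff, Fin.ext_iff]
    constructor <;> omega
  · intro y hy
    simp

lemma qcase2 (m : ℕ) :
    ((univ : Finset (Fin (m+2) × Fin (m+2) × Fin (m+2) × Fin (m+2))).filter fun x =>
      x.2.1.val = x.1.val + 1 ∧ x.2.2.1.val = x.2.2.2.val + 1
        ∧ 2 ≤ Nat.dist x.1.val x.2.2.2.val).card = m * m - m := by
  refine Eq.trans ?_ (qcase1 m)
  refine Finset.card_nbij' (fun x => (x.1, x.2.1, x.2.2.2, x.2.2.1))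
    (fun x => (x.1, x.2.1, x.2.2.2, x.2.2.1)) ?_ ?_ ?_ ?_ <;>
    simp [Finset.mem_filter] <;> tauto

lemma qcase3 (m : ℕ) :
    ((univ : Finset (Fin (m+2) × Fin (m+2) × Fin (m+2) × Fin (m+2))).filter fun x =>
      x.1.val = x.2.1.val + 1 ∧ x.2.2.2.val = x.2.2.1.val + 1
        ∧ 2 ≤ Nat.dist x.2.1.val x.2.2.1.val).card = m * m - m := by
  refine Eq.trans ?_ (qcase1 m)
  refine Finset.card_nbij' (fun x => (x.2.1, x.1, x.2.2))
    (fun x => (x.2.1, x.1, x.2.2)) ?_ ?_ ?_ ?_ <;>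
    simp [Finset.mem_filter] <;> tauto

lemma qcase4 (m : ℕ) :
    ((univ : Finset (Fin (m+2) × Fin (m+2) × Fin (m+2) × Fin (m+2))).filter fun x =>
      x.1.val = x.2.1.val + 1 ∧ x.2.2.1.val = x.2.2.2.val + 1
        ∧ 2 ≤ Nat.dist x.2.1.val x.2.2.2.val).card = m * m - m := by
  refine Eq.trans ?_ (qcase1 m)
  refine Finset.card_nbij' (fun x => (x.2.1, x.1, x.2.2.2, x.2.2.1))
    (fun x => (x.2.1, x.1, x.2.2.2, x.2.2.1)) ?_ ?_ ?_ ?_ <;>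
    simp [Finset.mem_filter] <;> tauto

lemma cnt4 (m : ℕ) :
    ((univ : Finset (Fin 4 → Fin (m+2))).filter fun f =>
      Function.Injective f ∧ Nat.dist (f 0).val (f 1).val = 1
        ∧ Nat.dist (f 2).val (f 3).val = 1).card = 4 * (m * m - m) := by
  have h1 : ∀ f : Fin 4 → Fin (m+2),
      (Function.Injective f ∧ Nat.dist (f 0).val (f 1).val = 1
        ∧ Nat.dist (f 2).val (f 3).val = 1)
      ↔ ((((f 1).val = (f 0).val + 1 ∧ (f 3).val = (f 2).val + 1
            ∧ 2 ≤ Nat.dist (f 0).val (f 2).val)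
         ∨ ((f 1).val = (f 0).val + 1 ∧ (f 2).val = (f 3).val + 1
            ∧ 2 ≤ Nat.dist (f 0).val (f 3).val))
        ∨ (((f 0).val = (f 1).val + 1 ∧ (f 3).val = (f 2).val + 1
            ∧ 2 ≤ Nat.dist (f 1).val (f 2).val)
         ∨ ((f 0).val = (f 1).val + 1 ∧ (f 2).val = (f 3).val + 1
            ∧ 2 ≤ Nat.dist (f 1).val (f 3).val))) := by
    intro f
    rw [inj4]
    simp only [ne_eq, Fin.ext_iff, nat_dist_eq]
    omega
  rw [Finset.filter_congr (fun f _ => h1 f),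
    card_fun4 (P := fun a b c d : Fin (m+2) =>
      ((b.val = a.val + 1 ∧ d.val = c.val + 1 ∧ 2 ≤ Nat.dist a.val c.val)
        ∨ (b.val = a.val + 1 ∧ c.val = d.val + 1 ∧ 2 ≤ Nat.dist a.val d.val))
      ∨ ((a.val = b.val + 1 ∧ d.val = c.val + 1 ∧ 2 ≤ Nat.dist b.val c.val)
        ∨ (a.val = b.val + 1 ∧ c.val = d.val + 1 ∧ 2 ≤ Nat.dist b.val d.val)))]
  rw [Finset.filter_or, Finset.card_union_of_disjoint, Finset.filter_or, Finset.filter_or,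
    Finset.card_union_of_disjoint, Finset.card_union_of_disjoint,
    qcase1, qcase2, qcase3, qcase4]
  · ring
  · rw [Finset.disjoint_filter]; intro x _ h1 h2; omega
  · rw [Finset.disjoint_filter]; intro x _ h1 h2; omega
  · rw [Finset.disjoint_filter]
    intro x _ h1 h2
    rcases h1 with h1 | h1 <;> rcases h2 with h2 | h2 <;> omega

section assembly
variable (n : ℕ)

def e2 (i : Fin (n+1)) : Fin 2 ↪ Fin (n+2) :=
  ⟨![i.castSucc, i.succ], by
    rw [inj2]
    simp [Fin.ext_iff]⟩

lemma bond_card (i : Fin (n+1)) :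
    (univ.filter fun p : Equiv.Perm (Fin (n+2)) =>
      Nat.dist (p i.castSucc).val (p i.succ).val = 1).card
    = n.factorial * (2 * (n+1)) := by
  have h := card_perm_pattern (e2 n i)
    (Q := fun f : Fin 2 → Fin (n+2) => Nat.dist (f 0).val (f 1).val = 1)
  simp only [Fintype.card_fin] at h
  rw [cnt2 (n+1)] at h
  rw [show n + 2 - 2 = n from by omega] at h
  rw [← h]
  apply Finset.card_bij (fun p _ => p)
  · intro p hp
    simp only [Finset.mem_filter, Finset.mem_univ, true_and] at hp ⊢
    simpa [e2] using hp
  · intro p q _ _ h; exact h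
  · intro p hp
    refine ⟨p, ?_, rfl⟩
    simp only [Finset.mem_filter, Finset.mem_univ, true_and] at hp ⊢
    simpa [e2] using hp

def e3 (i j : Fin (n+1)) (hj : j.val = i.val + 1) : Fin 3 ↪ Fin (n+2) :=
  ⟨![i.castSucc, i.succ, j.succ], by
    rw [inj3]
    simp [Fin.ext_iff]
    omega⟩

lemma adj_card (i j : Fin (n+1)) (hj : j.val = i.val + 1) :
    (univ.filter fun p : Equiv.Perm (Fin (n+2)) =>
      (Nat.dist (p i.castSucc).val (p i.succ).val = 1
        ∧ Nat.dist (p j.castSucc).val (p j.succ).val = 1)).card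
    = (n + 2 - 3).factorial * (2 * n) := by
  have h := card_perm_pattern (e3 n i j hj)
    (Q := fun f : Fin 3 → Fin (n+2) =>
      Nat.dist (f 0).val (f 1).val = 1 ∧ Nat.dist (f 1).val (f 2).val = 1)
  simp only [Fintype.card_fin] at h
  rw [cnt3 n] at h
  rw [← h]
  have hcast : j.castSucc = i.succ := by
    apply Fin.ext; simp [hj]
  apply Finset.card_bij (fun p _ => p)
  · intro p hp
    simp only [Finset.mem_filter, Finset.mem_univ, true_and] at hp ⊢
    rw [hcast] at hp
    simpa [e3] using hp
  · intro p q _ _ h; exact h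
  · intro p hp
    refine ⟨p, ?_, rfl⟩
    simp only [Finset.mem_filter, Finset.mem_univ, true_and] at hp ⊢
    rw [hcast]
    simpa [e3] using hp

def e4 (i j : Fin (n+1)) (hj : 2 ≤ Nat.dist i.val j.val) : Fin 4 ↪ Fin (n+2) :=
  ⟨![i.castSucc, i.succ, j.castSucc, j.succ], by
    rw [inj4]
    rw [nat_dist_eq] at hj
    simp [Fin.ext_iff]
    omega⟩

lemma far_card (i j : Fin (n+1)) (hj : 2 ≤ Nat.dist i.val j.val) :
    (univ.filter fun p : Equiv.Perm (Fin (n+2)) =>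
      (Nat.dist (p i.castSucc).val (p i.succ).val = 1
        ∧ Nat.dist (p j.castSucc).val (p j.succ).val = 1)).card
    = (n + 2 - 4).factorial * (4 * (n * n - n)) := by
  have h := card_perm_pattern (e4 n i j hj)
    (Q := fun f : Fin 4 → Fin (n+2) =>
      Nat.dist (f 0).val (f 1).val = 1 ∧ Nat.dist (f 2).val (f 3).val = 1)
  simp only [Fintype.card_fin] at h
  rw [cnt4 n] at h
  rw [← h]
  apply Finset.card_bij (fun p _ => p)
  · intro p hp
    simp only [Finset.mem_filter, Finset.mem_univ, true_and] at hp ⊢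
    simpa [e4] using hp
  · intro p q _ _ h; exact h
  · intro p hp
    refine ⟨p, ?_, rfl⟩
    simp only [Finset.mem_filter, Finset.mem_univ, true_and] at hp ⊢
    simpa [e4] using hp

lemma sumC : (∑ p : Equiv.Perm (Fin (n+2)), C p) = (n+1) * (n.factorial * (2*(n+1))) := by
  have hCp : ∀ p : Equiv.Perm (Fin (n+2)), C p = ∑ i : Fin (n+1),
      if Nat.dist (p i.castSucc).val (p i.succ).val = 1 then 1 else 0 := by
    intro p
    simp only [C, Finset.card_filter]
  rw [Finset.sum_congr rfl (fun p _ => hCp p), Finset.sum_comm]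
  have hinner : ∀ i : Fin (n+1), (∑ p : Equiv.Perm (Fin (n+2)),
      if Nat.dist (p i.castSucc).val (p i.succ).val = 1 then (1:ℕ) else 0)
      = n.factorial * (2*(n+1)) := by
    intro i
    rw [← Finset.card_filter]
    exact bond_card n i
  rw [Finset.sum_congr rfl (fun i _ => hinner i), Finset.sum_const, smul_eq_mul]
  simp [Finset.card_univ]

lemma sumCsq : (∑ p : Equiv.Perm (Fin (n+2)), (C p)^2)
    = (n+1) * (n.factorial * (2*(n+1))) + (2*n) * ((n+2-3).factorial * (2*n))
      + (n*n - n) * ((n+2-4).factorial * (4*(n*n-n))) := by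
  have hC : ∀ p : Equiv.Perm (Fin (n+2)), (C p)^2 = ∑ x : Fin (n+1) × Fin (n+1),
      if (Nat.dist (p x.1.castSucc).val (p x.1.succ).val = 1
          ∧ Nat.dist (p x.2.castSucc).val (p x.2.succ).val = 1) then 1 else 0 := by
    intro p
    rw [pow_two]
    simp only [C, Finset.card_filter]
    rw [Finset.sum_mul_sum, Fintype.sum_prod_type]
    exact Finset.sum_congr rfl fun i _ => Finset.sum_congr rfl fun j _ => ite_conj.symm
  rw [Finset.sum_congr rfl (fun p _ => hC p), Finset.sum_comm]
  have hF : ∀ x : Fin (n+1) × Fin (n+1), (∑ p : Equiv.Perm (Fin (n+2)),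
      if (Nat.dist (p x.1.castSucc).val (p x.1.succ).val = 1
          ∧ Nat.dist (p x.2.castSucc).val (p x.2.succ).val = 1) then (1:ℕ) else 0)
      = (univ.filter fun p : Equiv.Perm (Fin (n+2)) =>
          (Nat.dist (p x.1.castSucc).val (p x.1.succ).val = 1
            ∧ Nat.dist (p x.2.castSucc).val (p x.2.succ).val = 1)).card := by
    intro x
    rw [← Finset.card_filter]
  rw [Finset.sum_congr rfl (fun x _ => hF x)]
  rw [← Finset.sum_filter_add_sum_filter_not univ
    (fun x : Fin (n+1) × Fin (n+1) => x.1 = x.2)]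
  rw [← Finset.sum_filter_add_sum_filter_not
    ((univ : Finset (Fin (n+1) × Fin (n+1))).filter fun x => ¬ x.1 = x.2)
    (fun x => Nat.dist x.1.val x.2.val = 1)]
  have part1 : (∑ x ∈ (univ : Finset (Fin (n+1) × Fin (n+1))).filter (fun x => x.1 = x.2),
      (univ.filter fun p : Equiv.Perm (Fin (n+2)) =>
          (Nat.dist (p x.1.castSucc).val (p x.1.succ).val = 1
            ∧ Nat.dist (p x.2.castSucc).val (p x.2.succ).val = 1)).card)
      = (n+1) * (n.factorial * (2*(n+1))) := by
    have hval : ∀ x ∈ (univ : Finset (Fin (n+1) × Fin (n+1))).filter (fun x => x.1 = x.2),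
        (univ.filter fun p : Equiv.Perm (Fin (n+2)) =>
          (Nat.dist (p x.1.castSucc).val (p x.1.succ).val = 1
            ∧ Nat.dist (p x.2.castSucc).val (p x.2.succ).val = 1)).card
        = n.factorial * (2*(n+1)) := by
      intro x hx
      simp only [Finset.mem_filter, Finset.mem_univ, true_and] at hx
      rw [← hx]
      have heq : (univ.filter fun p : Equiv.Perm (Fin (n+2)) =>
          (Nat.dist (p x.1.castSucc).val (p x.1.succ).val = 1
            ∧ Nat.dist (p x.1.castSucc).val (p x.1.succ).val = 1))
          = univ.filter fun p : Equiv.Perm (Fin (n+2)) =>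
            Nat.dist (p x.1.castSucc).val (p x.1.succ).val = 1 := by
        apply Finset.filter_congr
        intro p _
        rw [and_self]
      rw [heq]
      exact bond_card n x.1
    rw [Finset.sum_congr rfl hval, Finset.sum_const, pairdiag n, smul_eq_mul]
  have hset2 : ((univ : Finset (Fin (n+1) × Fin (n+1))).filter fun x => ¬ x.1 = x.2).filter
      (fun x => Nat.dist x.1.val x.2.val = 1)
      = (univ : Finset (Fin (n+1) × Fin (n+1))).filter
        (fun x => Nat.dist x.1.val x.2.val = 1) := by
    rw [Finset.filter_filter]
    apply Finset.filter_congr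
    intro x _
    simp only [eq_iff_iff, Fin.ext_iff, nat_dist_eq]
    omega
  have part2 : (∑ x ∈ ((univ : Finset (Fin (n+1) × Fin (n+1))).filter
        fun x => ¬ x.1 = x.2).filter (fun x => Nat.dist x.1.val x.2.val = 1),
      (univ.filter fun p : Equiv.Perm (Fin (n+2)) =>
          (Nat.dist (p x.1.castSucc).val (p x.1.succ).val = 1
            ∧ Nat.dist (p x.2.castSucc).val (p x.2.succ).val = 1)).card)
      = (2*n) * ((n+2-3).factorial * (2*n)) := by
    rw [hset2]
    have hval : ∀ x ∈ (univ : Finset (Fin (n+1) × Fin (n+1))).filter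
        (fun x => Nat.dist x.1.val x.2.val = 1),
        (univ.filter fun p : Equiv.Perm (Fin (n+2)) =>
          (Nat.dist (p x.1.castSucc).val (p x.1.succ).val = 1
            ∧ Nat.dist (p x.2.castSucc).val (p x.2.succ).val = 1)).card
        = (n+2-3).factorial * (2*n) := by
      intro x hx
      simp only [Finset.mem_filter, Finset.mem_univ, true_and] at hx
      rw [nat_dist_eq] at hx
      rcases (by omega : x.2.val = x.1.val + 1 ∨ x.1.val = x.2.val + 1) with h | h
      · exact adj_card n x.1 x.2 h
      · have hcomm : (univ.filter fun p : Equiv.Perm (Fin (n+2)) =>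
            (Nat.dist (p x.1.castSucc).val (p x.1.succ).val = 1
              ∧ Nat.dist (p x.2.castSucc).val (p x.2.succ).val = 1))
            = univ.filter fun p : Equiv.Perm (Fin (n+2)) =>
              (Nat.dist (p x.2.castSucc).val (p x.2.succ).val = 1
                ∧ Nat.dist (p x.1.castSucc).val (p x.1.succ).val = 1) := by
          apply Finset.filter_congr
          intro p _
          rw [and_comm]
        rw [hcomm]
        exact adj_card n x.2 x.1 h
    rw [Finset.sum_congr rfl hval, Finset.sum_const, pairdist1 n, smul_eq_mul]
  have hset3 : ((univ : Finset (Fin (n+1) × Fin (n+1))).filter fun x => ¬ x.1 = x.2).filter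
      (fun x => ¬ Nat.dist x.1.val x.2.val = 1)
      = (univ : Finset (Fin (n+1) × Fin (n+1))).filter
        (fun x => 2 ≤ Nat.dist x.1.val x.2.val) := by
    rw [Finset.filter_filter]
    apply Finset.filter_congr
    intro x _
    simp only [eq_iff_iff, Fin.ext_iff, nat_dist_eq]
    omega
  have part3 : (∑ x ∈ ((univ : Finset (Fin (n+1) × Fin (n+1))).filter
        fun x => ¬ x.1 = x.2).filter (fun x => ¬ Nat.dist x.1.val x.2.val = 1),
      (univ.filter fun p : Equiv.Perm (Fin (n+2)) =>
          (Nat.dist (p x.1.castSucc).val (p x.1.succ).val = 1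
            ∧ Nat.dist (p x.2.castSucc).val (p x.2.succ).val = 1)).card)
      = (n*n - n) * ((n+2-4).factorial * (4*(n*n-n))) := by
    rw [hset3]
    have hval : ∀ x ∈ (univ : Finset (Fin (n+1) × Fin (n+1))).filter
        (fun x => 2 ≤ Nat.dist x.1.val x.2.val),
        (univ.filter fun p : Equiv.Perm (Fin (n+2)) =>
          (Nat.dist (p x.1.castSucc).val (p x.1.succ).val = 1
            ∧ Nat.dist (p x.2.castSucc).val (p x.2.succ).val = 1)).card
        = (n+2-4).factorial * (4*(n*n-n)) := by
      intro x hx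
      simp only [Finset.mem_filter, Finset.mem_univ, true_and] at hx
      exact far_card n x.1 x.2 hx
    rw [Finset.sum_congr rfl hval, Finset.sum_const, pairdist2 n, smul_eq_mul]
  rw [part1, part2, part3]
  ring

end assembly

theorem stmt8 (n : ℕ) :
    (∑ p : Equiv.Perm (Fin (n + 2)), (C p : ℚ) ^ 2) / (Nat.factorial (n + 2))
      - ((∑ p : Equiv.Perm (Fin (n + 2)), (C p : ℚ)) / (Nat.factorial (n + 2))) ^ 2
      = 4 * n ^ 2 / ((n + 2) * (n + 1)) + 2 * (n + 1) / (n + 2)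
        - 4 * (n + 1) ^ 2 / (n + 2) ^ 2 := by
  have h1 : (∑ p : Equiv.Perm (Fin (n + 2)), (C p : ℚ))
      = ((∑ p : Equiv.Perm (Fin (n+2)), C p : ℕ) : ℚ) := by push_cast; rfl
  have h2 : (∑ p : Equiv.Perm (Fin (n + 2)), (C p : ℚ)^2)
      = ((∑ p : Equiv.Perm (Fin (n+2)), (C p)^2 : ℕ) : ℚ) := by push_cast; rfl
  rw [h1, h2, sumC n, sumCsq n]
  rcases n with _ | _ | k
  · norm_num [Nat.factorial]
  · norm_num [Nat.factorial]
  · rw [show k+1+1+2-3 = k+1 from by omega, show k+1+1+2-4 = k from by omega,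
      show (k+1+1)*(k+1+1) - (k+1+1) = (k+2)*(k+1) from by
        have : (k+1+1)*(k+1+1) = (k+2)*(k+1)+(k+2) := by ring
        omega]
    rw [show (k+1+1+2).factorial = (k+4)*((k+3)*((k+2)*((k+1)*k.factorial))) from by
        rw [show k+1+1+2 = k+1+1+1+1 from by omega]
        simp [Nat.factorial_succ]; try ring
      ,
      show (k+1+1).factorial = (k+2)*((k+1)*k.factorial) from by
        simp [Nat.factorial_succ]; try ring
      ,
      Nat.factorial_succ k]
    have hk : (k.factorial : ℚ) ≠ 0 := Nat.cast_ne_zero.mpr (Nat.factorial_pos k).ne'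
    push_cast
    have c1 : ((k:ℚ)+1) ≠ 0 := by positivity
    have c2 : ((k:ℚ)+2) ≠ 0 := by positivity
    have c3 : ((k:ℚ)+3) ≠ 0 := by positivity
    have c4 : ((k:ℚ)+4) ≠ 0 := by positivity
    field_simp
    ring
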